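/- For all real x₁ < 0 and x₂ < 0 with x₁ ≠ x₂, the limit as a → +∞ of (1/(x₁−x₂)²) · [ (x₁x₂ − (a/2)(x₁+x₂)) / (√(x₁² − x₁a) · √(x₂² − x₂a)) − 1 ] equals 1 / (2 (√(−x₁) + √(−x₂))² √(−x₁) √(−x₂)). -/

import Mathlib

open Filter Topology

theorem airy_limit_resolvent (x₁ x₂ : ℝ) (h₁ : x₁ < 0) (h₂ : x₂ < 0) (hne : x₁ ≠ x₂) :
    Tendsto (fun a : ℝ =>
        (1/(x₁ - x₂)^2) *
          ((x₁*x₂ - (a/2)*(x₁ + x₂)) /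
              (Real.sqrt (x₁^2 - x₁*a) * Real.sqrt (x₂^2 - x₂*a)) - 1))
      atTop
      (𝓝 (1 / (2 * (Real.sqrt (-x₁) + Real.sqrt (-x₂))^2 *
        Real.sqrt (-x₁) * Real.sqrt (-x₂)))) := by
  have hx₁ : (0:ℝ) < -x₁ := by linarith
  have hx₂ : (0:ℝ) < -x₂ := by linarith
  set s₁ := Real.sqrt (-x₁) with hs₁def
  set s₂ := Real.sqrt (-x₂) with hs₂def
  have hs₁ : 0 < s₁ := Real.sqrt_pos.2 hx₁
  have hs₂ : 0 < s₂ := Real.sqrt_pos.2 hx₂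
  have hs₁sq : s₁^2 = -x₁ := Real.sq_sqrt hx₁.le
  have hs₂sq : s₂^2 = -x₂ := Real.sq_sqrt hx₂.le
  set h : ℝ → ℝ := fun t =>
    (x₁*x₂*t - (x₁+x₂)/2) /
      (s₁ * Real.sqrt (1 - x₁*t) * (s₂ * Real.sqrt (1 - x₂*t))) with hdef
  have hcont : ContinuousAt h 0 := by
    apply ContinuousAt.div
    · fun_prop
    · fun_prop
    · simp only [mul_zero, sub_zero, Real.sqrt_one, mul_one]
      positivity
  have hlim : Tendsto (fun a : ℝ => (1/(x₁-x₂)^2) * (h a⁻¹ - 1)) atTop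
      (𝓝 ((1/(x₁-x₂)^2) * (h 0 - 1))) :=
    ((hcont.tendsto.comp tendsto_inv_atTop_zero).sub tendsto_const_nhds).const_mul _
  have key : ∀ a : ℝ, 0 < a →
      (x₁*x₂ - (a/2)*(x₁+x₂)) /
        (Real.sqrt (x₁^2 - x₁*a) * Real.sqrt (x₂^2 - x₂*a)) = h a⁻¹ := by
    intro a ha
    have ha' : a ≠ 0 := ha.ne'
    have e1 : x₁^2 - x₁*a = (-x₁) * (a * (1 - x₁*a⁻¹)) := by field_simp; ring
    have e2 : x₂^2 - x₂*a = (-x₂) * (a * (1 - x₂*a⁻¹)) := by field_simp; ring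
    rw [e1, e2, Real.sqrt_mul hx₁.le, Real.sqrt_mul ha.le,
      Real.sqrt_mul hx₂.le, Real.sqrt_mul ha.le]
    have hr : Real.sqrt a * Real.sqrt a = a := Real.mul_self_sqrt ha.le
    have hD : s₁ * (Real.sqrt a * Real.sqrt (1 - x₁*a⁻¹)) *
        (s₂ * (Real.sqrt a * Real.sqrt (1 - x₂*a⁻¹))) =
        a * (s₁ * Real.sqrt (1 - x₁*a⁻¹) * (s₂ * Real.sqrt (1 - x₂*a⁻¹))) := by
      rw [show s₁ * (Real.sqrt a * Real.sqrt (1 - x₁*a⁻¹)) *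
          (s₂ * (Real.sqrt a * Real.sqrt (1 - x₂*a⁻¹))) =
          (Real.sqrt a * Real.sqrt a) *
            (s₁ * Real.sqrt (1 - x₁*a⁻¹) * (s₂ * Real.sqrt (1 - x₂*a⁻¹))) from by ring, hr]
    have hnum : (x₁*x₂ - (a/2)*(x₁+x₂))/a = x₁*x₂*a⁻¹ - (x₁+x₂)/2 := by
      field_simp
    simp only [hdef]
    rw [hD, ← div_div, hnum]
  have heq : (fun a : ℝ => (1/(x₁-x₂)^2) * (h a⁻¹ - 1)) =ᶠ[atTop]
      (fun a : ℝ =>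
        (1/(x₁ - x₂)^2) *
          ((x₁*x₂ - (a/2)*(x₁ + x₂)) /
              (Real.sqrt (x₁^2 - x₁*a) * Real.sqrt (x₂^2 - x₂*a)) - 1)) := by
    filter_upwards [eventually_gt_atTop 0] with a ha
    rw [key a ha]
  have hval : (1/(x₁-x₂)^2) * (h 0 - 1) =
      1 / (2 * (s₁ + s₂)^2 * s₁ * s₂) := by
    have hx₁e : x₁ = -s₁^2 := by linarith [hs₁sq]
    have hx₂e : x₂ = -s₂^2 := by linarith [hs₂sq]
    have hsne : s₁ ≠ s₂ := by
      intro hs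
      apply hne
      rw [hx₁e, hx₂e, hs]
    have hdiff : x₁ - x₂ ≠ 0 := sub_ne_zero.2 hne
    have h0 : h 0 = -(x₁+x₂)/2 / (s₁ * s₂) := by
      simp [hdef, Real.sqrt_one]
      ring
    have hsum : s₁ + s₂ ≠ 0 := by positivity
    have hd : s₁ - s₂ ≠ 0 := sub_ne_zero.2 hsne
    have key2 : -(x₁+x₂)/2/(s₁*s₂) - 1 = (s₁-s₂)^2/(2*s₁*s₂) := by
      rw [hx₁e, hx₂e]; field_simp; ring
    have key3 : (x₁-x₂)^2 = (s₁+s₂)^2*(s₁-s₂)^2 := by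
      rw [hx₁e, hx₂e]; ring
    rw [h0, key2, key3]
    field_simp
  exact hval ▸ hlim.congr' heq
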